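/- The family L₁ belongs to the class 1ReachU; that is, there exists a polynomial-size family of 1nfa's over {0,1,#} that is accept-few, reach-unambiguous, and solves L₁. -/

import Mathlib

/-! ## One-way nondeterministic finite automata -/

structure OneNFA (α : Type) : Type 1 where
  Q : Type
  [finQ : Fintype Q]
  start : Q
  next : Q → α → Set Q
  next_nonempty : ∀ q a, (next q a).Nonempty
  acc : Set Q

attribute [instance] OneNFA.finQ

namespace OneNFA

variable {α : Type}

/-- The state complexity (number of inner states). -/
def sc (M : OneNFA α) : ℕ := Fintype.card M.Q

/-- `p` is a computation path of `M` on input `x`. -/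
def IsPath (M : OneNFA α) (x : List α) (p : Fin (x.length + 1) → M.Q) : Prop :=
  p 0 = M.start ∧ ∀ i : Fin x.length, p i.succ ∈ M.next (p i.castSucc) (x.get i)

/-- `p` is an accepting computation path of `M` on input `x`. -/
def IsAccPath (M : OneNFA α) (x : List α) (p : Fin (x.length + 1) → M.Q) : Prop :=
  M.IsPath x p ∧ p (Fin.last x.length) ∈ M.acc

def Accepts (M : OneNFA α) (x : List α) : Prop := ∃ p, M.IsAccPath x p

/-- `M` is a 1dfa: every transition set is a singleton. -/
def Deterministic (M : OneNFA α) : Prop := ∀ q a, ∃ q', M.next q a = {q'}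

end OneNFA

/-! ## Families of promise problems -/

structure PromiseFamily (α : Type) where
  pos : ℕ → Set (List α)
  neg : ℕ → Set (List α)
  disj : ∀ n, Disjoint (pos n) (neg n)

namespace PromiseFamily

def valid {α : Type} (L : PromiseFamily α) (n : ℕ) : Set (List α) := L.pos n ∪ L.neg n

def co {α : Type} (L : PromiseFamily α) : PromiseFamily α :=
  ⟨L.neg, L.pos, fun n => (L.disj n).symm⟩

end PromiseFamily

/-- A family of promise problems over some finite alphabet. -/
structure Family : Type 1 where
  alph : Type
  [finA : Fintype alph]
  prob : PromiseFamily alph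

attribute [instance] Family.finA

def Family.co (F : Family) : Family := { alph := F.alph, prob := F.prob.co }

/-! ## One-way machine families -/

def Solves1 {α : Type} (M : ℕ → OneNFA α) (L : PromiseFamily α) : Prop :=
  ∀ n, (∀ x ∈ L.pos n, (M n).Accepts x) ∧ (∀ x ∈ L.neg n, ¬ (M n).Accepts x)

def PolySize1 {α : Type} (M : ℕ → OneNFA α) : Prop :=
  ∃ p : Polynomial ℕ, ∀ n, (M n).sc ≤ p.eval n

def Unambiguous1 {α : Type} (M : ℕ → OneNFA α) (L : PromiseFamily α) : Prop :=
  ∀ n, ∀ x ∈ L.valid n, {p | (M n).IsAccPath x p}.Subsingleton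

def AcceptFew1 {α : Type} (M : ℕ → OneNFA α) (L : PromiseFamily α) : Prop :=
  ∃ P : MvPolynomial (Fin 2) ℕ, ∀ n, ∀ x ∈ L.valid n,
    {p | (M n).IsAccPath x p}.ncard ≤ MvPolynomial.eval ![n, x.length] P

def WeaklyUnambiguous1 {α : Type} (M : ℕ → OneNFA α) (L : PromiseFamily α) : Prop :=
  ∀ n, ∀ x ∈ L.valid n, ∀ q : (M n).Q,
    {p | (M n).IsAccPath x p ∧ p (Fin.last x.length) = q}.Subsingleton

def ReachUnambiguous1 {α : Type} (M : ℕ → OneNFA α) (L : PromiseFamily α) : Prop :=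
  ∀ n, ∀ x ∈ L.valid n, ∀ i ≤ x.length, ∀ q : (M n).Q,
    {p : Fin ((x.take i).length + 1) → (M n).Q |
      (M n).IsPath (x.take i) p ∧ p (Fin.last (x.take i).length) = q}.Subsingleton

def ReachFew1 {α : Type} (M : ℕ → OneNFA α) (L : PromiseFamily α) : Prop :=
  ∃ P : MvPolynomial (Fin 2) ℕ, ∀ n, ∀ x ∈ L.valid n, ∀ i ≤ x.length, ∀ q : (M n).Q,
    {p : Fin ((x.take i).length + 1) → (M n).Q |
      (M n).IsPath (x.take i) p ∧ p (Fin.last (x.take i).length) = q}.ncard ≤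
      MvPolynomial.eval ![n, x.length] P

/-! ## One-way nonuniform state complexity classes -/

def oneN : Set Family :=
  {F | ∃ M : ℕ → OneNFA F.alph, PolySize1 M ∧ Solves1 M F.prob}

def oneD : Set Family :=
  {F | ∃ M : ℕ → OneNFA F.alph, PolySize1 M ∧ (∀ n, (M n).Deterministic) ∧ Solves1 M F.prob}

def oneU : Set Family :=
  {F | ∃ M : ℕ → OneNFA F.alph, PolySize1 M ∧ Unambiguous1 M F.prob ∧ Solves1 M F.prob}

def oneFew : Set Family :=
  {F | ∃ M : ℕ → OneNFA F.alph, PolySize1 M ∧ AcceptFew1 M F.prob ∧ Solves1 M F.prob}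

def oneFewU : Set Family :=
  {F | ∃ M : ℕ → OneNFA F.alph, PolySize1 M ∧ AcceptFew1 M F.prob ∧
        WeaklyUnambiguous1 M F.prob ∧ Solves1 M F.prob}

def oneReachU : Set Family :=
  {F | ∃ M : ℕ → OneNFA F.alph, PolySize1 M ∧ AcceptFew1 M F.prob ∧
        ReachUnambiguous1 M F.prob ∧ Solves1 M F.prob}

def oneReachFew : Set Family :=
  {F | ∃ M : ℕ → OneNFA F.alph, PolySize1 M ∧ AcceptFew1 M F.prob ∧
        ReachFew1 M F.prob ∧ Solves1 M F.prob}

def oneReachFewU : Set Family :=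
  {F | ∃ M : ℕ → OneNFA F.alph, PolySize1 M ∧ AcceptFew1 M F.prob ∧
        ReachFew1 M F.prob ∧ WeaklyUnambiguous1 M F.prob ∧ Solves1 M F.prob}

/-- The complement class `co-C`. -/
def coC (C : Set Family) : Set Family := {F | F.co ∈ C}
/-! ## Two-way nondeterministic finite automata -/

/-- A tape symbol: either an input symbol, the left endmarker `Sum.inr false`,
or the right endmarker `Sum.inr true`. -/
def TapeSym (α : Type) : Type := α ⊕ Bool

/-- The symbol held in cell `i` of the tape containing `▷x◁`. -/
def tapeAt {α : Type} (x : List α) (i : ℕ) : TapeSym α :=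
  if h0 : i = 0 then Sum.inr false
  else if h : i ≤ x.length then Sum.inl (x.get ⟨i - 1, by omega⟩)
  else Sum.inr true

structure TwoNFA (α : Type) : Type 1 where
  Q : Type
  [finQ : Fintype Q]
  start : Q
  acc : Set Q
  rej : Set Q
  acc_rej_disj : Disjoint acc rej
  next : Q → TapeSym α → Set (Q × ℤ)
  next_dir : ∀ q a t, t ∈ next q a → t.2 = -1 ∨ t.2 = 0 ∨ t.2 = 1

attribute [instance] TwoNFA.finQ

namespace TwoNFA

variable {α : Type}

def sc (M : TwoNFA α) : ℕ := Fintype.card M.Q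

def Halting (M : TwoNFA α) (q : M.Q) : Prop := q ∈ M.acc ∨ q ∈ M.rej

/-- Configuration `c` yields configuration `c'` in one step on input `x`. -/
def Yields (M : TwoNFA α) (x : List α) (c c' : M.Q × ℕ) : Prop :=
  ¬ M.Halting c.1 ∧ c.2 ≤ x.length + 1 ∧ c'.2 ≤ x.length + 1 ∧
    ∃ d : ℤ, (c'.1, d) ∈ M.next c.1 (tapeAt x c.2) ∧ (c'.2 : ℤ) = (c.2 : ℤ) + d

/-- A partial computation path of length `k` of `M` on `x`. -/
def IsPartialPath (M : TwoNFA α) (x : List α) (k : ℕ) (p : Fin (k + 1) → M.Q × ℕ) : Prop :=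
  p 0 = (M.start, 0) ∧ ∀ i : Fin k, M.Yields x (p i.castSucc) (p i.succ)

/-- A (full) computation path: the final configuration is the only halting one. -/
def IsCompPath (M : TwoNFA α) (x : List α) (k : ℕ) (p : Fin (k + 1) → M.Q × ℕ) : Prop :=
  M.IsPartialPath x k p ∧ ∀ i : Fin (k + 1), (M.Halting (p i).1 ↔ i = Fin.last k)

def IsAccPath (M : TwoNFA α) (x : List α) (k : ℕ) (p : Fin (k + 1) → M.Q × ℕ) : Prop :=
  M.IsCompPath x k p ∧ (p (Fin.last k)).1 ∈ M.acc

def Accepts (M : TwoNFA α) (x : List α) : Prop := ∃ k p, M.IsAccPath x k p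

def Deterministic (M : TwoNFA α) : Prop := ∀ q a, ∃ t, M.next q a = {t}

/-- The set of accepting computation paths of `M` on `x`. -/
def accPaths (M : TwoNFA α) (x : List α) : Set ((k : ℕ) × (Fin (k + 1) → M.Q × ℕ)) :=
  {kp | M.IsAccPath x kp.1 kp.2}

/-- The set of computation paths of `M` on `x` ending at configuration `conf`. -/
def compPathsTo (M : TwoNFA α) (x : List α) (conf : M.Q × ℕ) :
    Set ((k : ℕ) × (Fin (k + 1) → M.Q × ℕ)) :=
  {kp | M.IsCompPath x kp.1 kp.2 ∧ kp.2 (Fin.last kp.1) = conf}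

/-- The set of partial computation paths of `M` on `x` ending at configuration `conf`. -/
def partialPathsTo (M : TwoNFA α) (x : List α) (conf : M.Q × ℕ) :
    Set ((k : ℕ) × (Fin (k + 1) → M.Q × ℕ)) :=
  {kp | M.IsPartialPath x kp.1 kp.2 ∧ kp.2 (Fin.last kp.1) = conf}

end TwoNFA

/-! ## Two-way machine families -/

def Solves2 {α : Type} (M : ℕ → TwoNFA α) (L : PromiseFamily α) : Prop :=
  ∀ n, (∀ x ∈ L.pos n, (M n).Accepts x) ∧ (∀ x ∈ L.neg n, ¬ (M n).Accepts x)

def PolySize2 {α : Type} (M : ℕ → TwoNFA α) : Prop :=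
  ∃ p : Polynomial ℕ, ∀ n, (M n).sc ≤ p.eval n

def Unambiguous2 {α : Type} (M : ℕ → TwoNFA α) (L : PromiseFamily α) : Prop :=
  ∀ n, ∀ x ∈ L.valid n, ((M n).accPaths x).Subsingleton

def AcceptFew2 {α : Type} (M : ℕ → TwoNFA α) (L : PromiseFamily α) : Prop :=
  ∃ P : MvPolynomial (Fin 2) ℕ, ∀ n, ∀ x ∈ L.valid n,
    ((M n).accPaths x).encard ≤ (MvPolynomial.eval ![n, x.length] P : ℕ∞)

def WeaklyUnambiguous2 {α : Type} (M : ℕ → TwoNFA α) (L : PromiseFamily α) : Prop :=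
  ∀ n, ∀ x ∈ L.valid n, ∀ conf : (M n).Q × ℕ, conf.1 ∈ (M n).acc →
    ((M n).compPathsTo x conf).Subsingleton

def ReachUnambiguous2 {α : Type} (M : ℕ → TwoNFA α) (L : PromiseFamily α) : Prop :=
  ∀ n, ∀ x ∈ L.valid n, ∀ conf : (M n).Q × ℕ,
    ((M n).partialPathsTo x conf).Subsingleton

def ReachFew2 {α : Type} (M : ℕ → TwoNFA α) (L : PromiseFamily α) : Prop :=
  ∃ P : MvPolynomial (Fin 2) ℕ, ∀ n, ∀ x ∈ L.valid n, ∀ conf : (M n).Q × ℕ,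
    ((M n).partialPathsTo x conf).encard ≤ (MvPolynomial.eval ![n, x.length] P : ℕ∞)

/-! ## Two-way nonuniform state complexity classes -/

def twoN : Set Family :=
  {F | ∃ M : ℕ → TwoNFA F.alph, PolySize2 M ∧ Solves2 M F.prob}

def twoD : Set Family :=
  {F | ∃ M : ℕ → TwoNFA F.alph, PolySize2 M ∧ (∀ n, (M n).Deterministic) ∧ Solves2 M F.prob}

def twoU : Set Family :=
  {F | ∃ M : ℕ → TwoNFA F.alph, PolySize2 M ∧ Unambiguous2 M F.prob ∧ Solves2 M F.prob}

def twoFew : Set Family :=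
  {F | ∃ M : ℕ → TwoNFA F.alph, PolySize2 M ∧ AcceptFew2 M F.prob ∧ Solves2 M F.prob}

def twoFewU : Set Family :=
  {F | ∃ M : ℕ → TwoNFA F.alph, PolySize2 M ∧ AcceptFew2 M F.prob ∧
        WeaklyUnambiguous2 M F.prob ∧ Solves2 M F.prob}

def twoReachU : Set Family :=
  {F | ∃ M : ℕ → TwoNFA F.alph, PolySize2 M ∧ AcceptFew2 M F.prob ∧
        ReachUnambiguous2 M F.prob ∧ Solves2 M F.prob}

def twoReachFew : Set Family :=
  {F | ∃ M : ℕ → TwoNFA F.alph, PolySize2 M ∧ AcceptFew2 M F.prob ∧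
        ReachFew2 M F.prob ∧ Solves2 M F.prob}

def twoReachFewU : Set Family :=
  {F | ∃ M : ℕ → TwoNFA F.alph, PolySize2 M ∧ AcceptFew2 M F.prob ∧
        ReachFew2 M F.prob ∧ WeaklyUnambiguous2 M F.prob ∧ Solves2 M F.prob}

/-! ## Ceilings -/

/-- The family `F` has an `f(n)`-ceiling. -/
def HasCeiling (F : Family) (f : ℕ → ℕ) : Prop :=
  ∀ n, ∀ x ∈ F.prob.valid n, x.length ≤ f n

/-- The restriction `C/F` of a class `C` to families having an `f`-ceiling for some `f ∈ S`. -/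
def ceil (C : Set Family) (S : Set (ℕ → ℕ)) : Set Family :=
  {F | F ∈ C ∧ ∃ f ∈ S, HasCeiling F f}

def polyFuns : Set (ℕ → ℕ) := {f | ∃ p : Polynomial ℕ, ∀ n, f n = p.eval n}

/-- Super-exponential functions: `f(n) > 2^{p(n)}` for all but finitely many `n`,
for every polynomial `p`. -/
def supexpFuns : Set (ℕ → ℕ) :=
  {f | ∀ p : Polynomial ℕ, ∃ N, ∀ n ≥ N, 2 ^ p.eval n < f n}

/-- `F` has a logarithmic ceiling `ℓ(n) = a·log₂ n + b` with constants `a, b ≥ 0`. -/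
def HasLogCeiling (F : Family) : Prop :=
  ∃ a b : ℝ, 0 ≤ a ∧ 0 ≤ b ∧
    ∀ n, ∀ x ∈ F.prob.valid n, (x.length : ℝ) ≤ a * Real.logb 2 n + b

/-- The restriction `C/log` of a class `C` to families having logarithmic ceilings. -/
def ceilLog (C : Set Family) : Set Family := {F | F ∈ C ∧ HasLogCeiling F}
/-! ## The alphabet `{0, 1, #}` and encodings -/

inductive Sym3 : Type
  | zero | one | hash
deriving DecidableEq

instance : Fintype Sym3 :=
  ⟨{Sym3.zero, Sym3.one, Sym3.hash}, by intro x; cases x <;> simp⟩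

/-- The block `1^i 0^{m-i}`. -/
def block (m i : ℕ) : List Sym3 :=
  List.replicate i Sym3.one ++ List.replicate (m - i) Sym3.zero

lemma block_length {m i : ℕ} (h : i ≤ m) : (block m i).length = m := by
  simp [block]; omega

lemma block_count {m : ℕ} (i : ℕ) : (block m i).count Sym3.one = i := by
  simp [block, List.count_append, List.count_replicate]

lemma block_inj {m i j : ℕ} (h : block m i = block m j) : i = j := by
  have := block_count (m := m) i
  rw [h, block_count] at this
  omega

/-- The encoding `[[i₁,…,i_k]]_m` of a list of numbers. -/
def enc (m : ℕ) : List ℕ → List Sym3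
  | [] => []
  | [i] => block m i
  | i :: j :: rest => block m i ++ Sym3.zero :: enc m (j :: rest)

/-- Lists of length `k` with entries in `[n]`. -/
def ValidList (n k : ℕ) (l : List ℕ) : Prop :=
  l.length = k ∧ ∀ i ∈ l, 1 ≤ i ∧ i ≤ n

lemma enc_length {m : ℕ} :
    ∀ l : List ℕ, (∀ i ∈ l, i ≤ m) → (enc m l).length = l.length * (m + 1) - 1
  | [] => by simp [enc]
  | [i] => by
      intro h
      simp [enc, block_length (h i (by simp))]
  | i :: j :: rest => by
      intro h
      have ih := enc_length (j :: rest) (fun a ha => h a (List.mem_cons_of_mem _ ha))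
      have hb : (block m i).length = m := block_length (h i (List.mem_cons_self))
      show (block m i ++ Sym3.zero :: enc m (j :: rest)).length = _
      rw [List.length_append, hb, List.length_cons, ih]
      have hc : (i :: j :: rest).length = (j :: rest).length + 1 := by simp
      rw [hc]
      set L := (j :: rest).length with hLdef
      have hL : 1 ≤ L := by simp [hLdef]
      have h1 : (L + 1) * (m + 1) = L * (m + 1) + (m + 1) := by ring
      rw [h1]
      set P := L * (m + 1) with hPdef
      have hP : 1 ≤ P := by
        have := Nat.mul_le_mul hL (Nat.le_add_left 1 m)
        simpa [hPdef] using this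
      omega

lemma enc_ne_nil {m : ℕ} (i : ℕ) (rest : List ℕ) (hi : 1 ≤ i) :
    enc m (i :: rest) ≠ [] := by
  cases rest with
  | nil =>
      simp only [enc, block]
      intro h
      have := congrArg List.length h
      simp at this
      omega
  | cons j rest' =>
      simp only [enc]
      intro h
      have := congrArg List.length h
      simp at this

lemma enc_inj {m : ℕ} :
    ∀ u w : List ℕ, (∀ i ∈ u, 1 ≤ i ∧ i ≤ m) → (∀ i ∈ w, 1 ≤ i ∧ i ≤ m) →
      enc m u = enc m w → u = w
  | [], [], _, _, _ => rfl
  | [], j :: w', _, hw, h => by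
      exact absurd h.symm (enc_ne_nil j w' (hw j (by simp)).1)
  | i :: u', [], hu, _, h => by
      exact absurd h (enc_ne_nil i u' (hu i (by simp)).1)
  | [i], [j], hu, hw, h => by
      simp only [enc] at h
      rw [block_inj h]
  | [i], j :: b :: w', hu, hw, h => by
      exfalso
      have hl := congrArg List.length h
      rw [show enc m [i] = block m i from rfl,
        show enc m (j :: b :: w') = block m j ++ Sym3.zero :: enc m (b :: w') from rfl] at hl
      rw [List.length_append, List.length_cons,
        block_length (hu i (by simp)).2, block_length (hw j (by simp)).2] at hl
      omega
  | i :: a :: u', [j], hu, hw, h => by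
      exfalso
      have hl := congrArg List.length h
      rw [show enc m [j] = block m j from rfl,
        show enc m (i :: a :: u') = block m i ++ Sym3.zero :: enc m (a :: u') from rfl] at hl
      rw [List.length_append, List.length_cons,
        block_length (hu i (by simp)).2, block_length (hw j (by simp)).2] at hl
      omega
  | i :: a :: u', j :: b :: w', hu, hw, h => by
      rw [show enc m (i :: a :: u') = block m i ++ Sym3.zero :: enc m (a :: u') from rfl,
        show enc m (j :: b :: w') = block m j ++ Sym3.zero :: enc m (b :: w') from rfl] at h
      have hlen : (block m i).length = (block m j).length := by
        rw [block_length (hu i (by simp)).2, block_length (hw j (by simp)).2]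
      obtain ⟨h1, h2⟩ := List.append_inj h hlen
      have h3 : enc m (a :: u') = enc m (b :: w') := by
        simpa using h2
      have ih := enc_inj (a :: u') (b :: w')
        (fun x hx => hu x (List.mem_cons_of_mem _ hx))
        (fun x hx => hw x (List.mem_cons_of_mem _ hx)) h3
      rw [block_inj h1, ih]
/-! ## The promise problem family `L₁` -/

def L1pos (n : ℕ) : Set (List Sym3) :=
  {x | ∃ u v : List ℕ, ValidList n n u ∧ ValidList n n v ∧ u ≠ v ∧
        x = enc n u ++ Sym3.hash :: enc n v}

def L1neg (n : ℕ) : Set (List Sym3) :=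
  {x | ∃ u v : List ℕ, ValidList n n u ∧ ValidList n n v ∧ u = v ∧
        x = enc n u ++ Sym3.hash :: enc n v}

lemma L1_disj (n : ℕ) : Disjoint (L1pos n) (L1neg n) := by
  rw [Set.disjoint_left]
  rintro x ⟨u, v, hu, hv, huv, rfl⟩ ⟨u', v', hu', hv', huv', heq⟩
  have hlen : (enc n u).length = (enc n u').length := by
    rw [enc_length u (fun i hi => (hu.2 i hi).2),
      enc_length u' (fun i hi => (hu'.2 i hi).2), hu.1, hu'.1]
  obtain ⟨h1, h2⟩ := List.append_inj heq hlen
  have h2' : enc n v = enc n v' := by simpa using h2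
  have e1 : u = u' := enc_inj u u' hu.2 hu'.2 h1
  have e2 : v = v' := enc_inj v v' hv.2 hv'.2 h2'
  exact huv (by rw [e1, e2, huv'])

def L1prob : PromiseFamily Sym3 := ⟨L1pos, L1neg, L1_disj⟩

def L1fam : Family := { alph := Sym3, prob := L1prob }

/-! ## Matrices, their encodings, and the promise problem family `L₂` -/

/-- `R` represents an `n × n` matrix with entries in `[n]`, given as its list of rows. -/
def ValidMat (n : ℕ) (R : List (List ℕ)) : Prop :=
  R.length = n ∧ ∀ r ∈ R, ValidList n n r

/-- The encoding `[[D]]_n` of a matrix: its encoded rows joined by `#`. -/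
def encMat (n : ℕ) : List (List ℕ) → List Sym3
  | [] => []
  | [r] => enc n r
  | r :: s :: rest => enc n r ++ Sym3.hash :: encMat n (s :: rest)

lemma encMat_len {n : ℕ} :
    ∀ R : List (List ℕ), (∀ r ∈ R, ValidList n n r) →
      (encMat n R).length = R.length * (n * (n + 1) - 1 + 1) - 1
  | [] => by simp [encMat]
  | [r] => by
      intro h
      have hr := h r (by simp)
      have he : (enc n r).length = n * (n + 1) - 1 := by
        rw [enc_length r (fun i hi => (hr.2 i hi).2), hr.1]
      show (enc n r).length = ([r] : List (List ℕ)).length * (n * (n + 1) - 1 + 1) - 1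
      rw [he, show ([r] : List (List ℕ)).length = 1 from rfl]
      omega
  | r :: s :: rest => by
      intro h
      have ih := encMat_len (s :: rest) (fun a ha => h a (List.mem_cons_of_mem _ ha))
      have hr := h r (by simp)
      have he : (enc n r).length = n * (n + 1) - 1 := by
        rw [enc_length r (fun i hi => (hr.2 i hi).2), hr.1]
      show (enc n r ++ Sym3.hash :: encMat n (s :: rest)).length = _
      rw [List.length_append, he, List.length_cons, ih]
      have hc : (r :: s :: rest).length = (s :: rest).length + 1 := by simp
      rw [hc]
      set e := n * (n + 1) - 1 with hedef
      set L := (s :: rest).length with hLdef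
      have hL : 1 ≤ L := by simp [hLdef]
      have h1 : (L + 1) * (e + 1) = L * (e + 1) + (e + 1) := by ring
      rw [h1]
      set P := L * (e + 1) with hPdef
      have hP : 1 ≤ P := by
        calc 1 = 1 * 1 := by ring
        _ ≤ L * (e + 1) := Nat.mul_le_mul hL (by omega)
      omega

lemma encMat_inj {n : ℕ} :
    ∀ R W : List (List ℕ), (∀ r ∈ R, ValidList n n r) → (∀ r ∈ W, ValidList n n r) →
      R.length = W.length → encMat n R = encMat n W → R = W
  | [], [], _, _, _, _ => rfl
  | [], _ :: _, _, _, hl, _ => by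
      simp only [List.length_cons, List.length_nil] at hl
      omega
  | _ :: _, [], _, _, hl, _ => by
      simp only [List.length_cons, List.length_nil] at hl
      omega
  | [r], [w], hR, hW, _, h => by
      have := enc_inj r w (hR r (by simp)).2 (hW w (by simp)).2 h
      rw [this]
  | [r], w :: w' :: W', _, _, hl, _ => by
      simp only [List.length_cons, List.length_nil] at hl
      omega
  | r :: r' :: R', [w], _, _, hl, _ => by
      simp only [List.length_cons, List.length_nil] at hl
      omega
  | r :: r' :: R', w :: w' :: W', hR, hW, hl, h => by
      rw [show encMat n (r :: r' :: R') = enc n r ++ Sym3.hash :: encMat n (r' :: R') from rfl,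
        show encMat n (w :: w' :: W') = enc n w ++ Sym3.hash :: encMat n (w' :: W') from rfl] at h
      have hrlen : (enc n r).length = (enc n w).length := by
        have h1 := hR r (by simp); have h2 := hW w (by simp)
        rw [enc_length r (fun i hi => (h1.2 i hi).2),
          enc_length w (fun i hi => (h2.2 i hi).2), h1.1, h2.1]
      obtain ⟨h1, h2⟩ := List.append_inj h hrlen
      have h3 : encMat n (r' :: R') = encMat n (w' :: W') := by simpa using h2
      have ihr := enc_inj r w (hR r (by simp)).2 (hW w (by simp)).2 h1
      have ih := encMat_inj (r' :: R') (w' :: W')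
        (fun a ha => hR a (List.mem_cons_of_mem _ ha))
        (fun a ha => hW a (List.mem_cons_of_mem _ ha))
        (by simpa using hl) h3
      rw [ihr, ih]

/-- `SelSum R s` holds iff `s` is obtained by choosing one entry from each row of `R`
(the value `sum_D(σ)` for some choice function `σ`). -/
inductive SelSum : List (List ℕ) → ℕ → Prop
  | nil : SelSum [] 0
  | cons {a : ℕ} {r : List ℕ} {rest : List (List ℕ)} {s : ℕ} :
      a ∈ r → SelSum rest s → SelSum (r :: rest) (a + s)

def L2pos (n : ℕ) : Set (List Sym3) :=
  {x | ∃ R R' : List (List ℕ), ValidMat n R ∧ ValidMat n R' ∧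
        (∃ s : ℕ, SelSum R s ∧ SelSum R' s) ∧
        x = encMat n R ++ Sym3.hash :: Sym3.hash :: encMat n R'}

def L2neg (n : ℕ) : Set (List Sym3) :=
  {x | ∃ R R' : List (List ℕ), ValidMat n R ∧ ValidMat n R' ∧
        (∀ s s' : ℕ, SelSum R s → SelSum R' s' → s ≠ s') ∧
        x = encMat n R ++ Sym3.hash :: Sym3.hash :: encMat n R'}

lemma L2_disj (n : ℕ) : Disjoint (L2pos n) (L2neg n) := by
  rw [Set.disjoint_left]
  rintro x ⟨R, R', hR, hR', ⟨s, hs, hs'⟩, rfl⟩ ⟨W, W', hW, hW', hne, heq⟩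
  have hlen : (encMat n R).length = (encMat n W).length := by
    rw [encMat_len R hR.2, encMat_len W hW.2, hR.1, hW.1]
  obtain ⟨h1, h2⟩ := List.append_inj heq hlen
  have h2' : encMat n R' = encMat n W' := by simpa using h2
  have e1 : R = W := encMat_inj R W hR.2 hW.2 (by rw [hR.1, hW.1]) h1
  have e2 : R' = W' := encMat_inj R' W' hR'.2 hW'.2 (by rw [hR'.1, hW'.1]) h2'
  exact hne s s (e1 ▸ hs) (e2 ▸ hs') rfl

def L2prob : PromiseFamily Sym3 := ⟨L2pos, L2neg, L2_disj⟩

def L2fam : Family := { alph := Sym3, prob := L2prob }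
/-! ## One-way probabilistic finite automata data -/

/-- Product of the matrices of the symbols of a word. -/
noncomputable def wordMatrix {α Q : Type} [Fintype Q] [DecidableEq Q]
    (Mσ : TapeSym α → Matrix Q Q ℝ) (w : List (TapeSym α)) : Matrix Q Q ℝ :=
  (w.map Mσ).prod

/-- The tape word `▷ x ◁`. -/
def tapeWord {α : Type} (x : List α) : List (TapeSym α) :=
  Sum.inr false :: (x.map Sum.inl ++ [Sum.inr true])

/-- `p_{acc}(x : q)`: the `q`-entry of the row vector `ν · M_{▷x◁}`. -/
noncomputable def pacc {α Q : Type} [Fintype Q] [DecidableEq Q]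
    (ν : Q → ℝ) (Mσ : TapeSym α → Matrix Q Q ℝ) (x : List α) (q : Q) : ℝ :=
  Matrix.vecMul ν (wordMatrix Mσ (tapeWord x)) q
namespace RUaux

inductive Info : Type
  | uStart | uIn (k : ℕ) | uGap (k : ℕ) | uCnt (c : ℕ) | uDone (i : ℕ)
  | vStart (i : ℕ) | vIn (i k : ℕ) | vGap (i k : ℕ) | vCnt (i c : ℕ)
  | ac | rj | dead
deriving DecidableEq

open Info

def rawStep (e : ℕ) : Info → Sym3 → Info
  | .uStart, .one => if e = 0 then .uCnt 1 else .uIn 0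
  | .uStart, _ => .dead
  | .uIn k, .one => .uIn k
  | .uIn k, .zero => .uGap k
  | .uIn _, .hash => .dead
  | .uGap k, .one => if k + 1 = e then .uCnt 1 else .uIn (k+1)
  | .uGap k, .zero => .uGap k
  | .uGap _, .hash => .dead
  | .uCnt c, .one => .uCnt (c+1)
  | .uCnt c, .zero => .uDone c
  | .uCnt c, .hash => .vStart c
  | .uDone i, .hash => .vStart i
  | .uDone i, _ => .uDone i
  | .vStart i, .one => if e = 0 then .vCnt i 1 else .vIn i 0
  | .vStart _, _ => .dead
  | .vIn i k, .one => .vIn i k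
  | .vIn i k, .zero => .vGap i k
  | .vIn _ _, .hash => .dead
  | .vGap i k, .one => if k + 1 = e then .vCnt i 1 else .vIn i (k+1)
  | .vGap i k, .zero => .vGap i k
  | .vGap _ _, .hash => .dead
  | .vCnt i c, .one => .vCnt (i) (c+1)
  | .vCnt i c, .zero => if i = c then .rj else .ac
  | .vCnt _ _, .hash => .dead
  | .ac, _ => .ac
  | .rj, _ => .rj
  | .dead, _ => .dead

def bndb (n : ℕ) : Info → Bool
  | .uIn k => k < n
  | .uGap k => k < n
  | .uCnt c => c ≤ n
  | .uDone i => i ≤ n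
  | .vStart i => i ≤ n
  | .vIn i k => i ≤ n ∧ k < n
  | .vGap i k => i ≤ n ∧ k < n
  | .vCnt i c => i ≤ n ∧ c ≤ n
  | _ => true

def step (n e : ℕ) (s : Info) (a : Sym3) : Info :=
  if bndb n (rawStep e s a) then rawStep e s a else .dead

lemma step_bnd (n e : ℕ) (s : Info) (a : Sym3) : bndb n (step n e s a) = true := by
  unfold step; split
  · assumption
  · rfl

def accB : Info → Bool
  | .ac => true
  | .vCnt i c => decide (i ≠ c)
  | _ => false

variable {n e : ℕ}

local notation "Fl" => List.foldl (step n e)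

lemma foldl_bnd (w : List Sym3) (s : Info) (hs : bndb n s = true) : bndb n (Fl s w) = true := by
  induction w generalizing s with
  | nil => exact hs
  | cons a w ih => exact ih _ (step_bnd n e s a)

lemma fl_ac (w : List Sym3) : Fl .ac w = .ac := by
  induction w with
  | nil => rfl
  | cons a w ih => simpa [step, rawStep, bndb] using ih

lemma fl_rj (w : List Sym3) : Fl .rj w = .rj := by
  induction w with
  | nil => rfl
  | cons a w ih => simpa [step, rawStep, bndb] using ih

lemma fl_dead (w : List Sym3) : Fl .dead w = .dead := by
  induction w with
  | nil => rfl
  | cons a w ih => simpa [step, rawStep, bndb] using ih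

lemma fl_uDone (w : List Sym3) (i : ℕ) (hi : i ≤ n) (hw : Sym3.hash ∉ w) :
    Fl (.uDone i) w = .uDone i := by
  induction w with
  | nil => rfl
  | cons a w ih =>
    simp only [List.mem_cons, not_or] at hw
    cases a with
    | hash => exact absurd rfl hw.1
    | zero => simpa [step, rawStep, bndb, hi] using ih hw.2
    | one => simpa [step, rawStep, bndb, hi] using ih hw.2

lemma fl_uIn_one (j k : ℕ) (hk : k < n) : Fl (.uIn k) (List.replicate j .one) = .uIn k := by
  induction j with
  | zero => rfl
  | succ j ih => simpa [List.replicate_succ, step, rawStep, bndb, hk] using ih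

lemma fl_uGap_zero (j k : ℕ) (hk : k < n) : Fl (.uGap k) (List.replicate j .zero) = .uGap k := by
  induction j with
  | zero => rfl
  | succ j ih => simpa [List.replicate_succ, step, rawStep, bndb, hk] using ih

lemma fl_uCnt_one (j : ℕ) : ∀ c, c + j ≤ n → Fl (.uCnt c) (List.replicate j .one) = .uCnt (c + j) := by
  induction j with
  | zero => intro c _; rfl
  | succ j ih =>
    intro c hc
    have h1 : c + 1 ≤ n := by omega
    rw [List.replicate_succ, List.foldl_cons,
      show step n e (.uCnt c) .one = .uCnt (c+1) by simp [step, rawStep, bndb, h1],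
      ih (c+1) (by omega), show c + 1 + j = c + (j+1) by omega]

lemma fl_vIn_one (j i k : ℕ) (hi : i ≤ n) (hk : k < n) :
    Fl (.vIn i k) (List.replicate j .one) = .vIn i k := by
  induction j with
  | zero => rfl
  | succ j ih => simpa [List.replicate_succ, step, rawStep, bndb, hk, hi] using ih

lemma fl_vGap_zero (j i k : ℕ) (hi : i ≤ n) (hk : k < n) :
    Fl (.vGap i k) (List.replicate j .zero) = .vGap i k := by
  induction j with
  | zero => rfl
  | succ j ih => simpa [List.replicate_succ, step, rawStep, bndb, hk, hi] using ih

lemma fl_vCnt_one (j i : ℕ) (hi : i ≤ n) :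
    ∀ c, c + j ≤ n → Fl (.vCnt i c) (List.replicate j .one) = .vCnt i (c + j) := by
  induction j with
  | zero => intro c _; rfl
  | succ j ih =>
    intro c hc
    have h1 : c + 1 ≤ n := by omega
    rw [List.replicate_succ, List.foldl_cons,
      show step n e (.vCnt i c) .one = .vCnt i (c+1) by simp [step, rawStep, bndb, h1, hi],
      ih (c+1) (by omega), show c + 1 + j = c + (j+1) by omega]

end RUaux

namespace RUaux
open Info
variable {n e : ℕ}
local notation "Fl" => List.foldl (step n e)

def preU : ℕ → Info
  | 0 => .uStart
  | k+1 => .uGap k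

def preV (i : ℕ) : ℕ → Info
  | 0 => .vStart i
  | k+1 => .vGap i k

lemma step_preU_lt {k : ℕ} (hk : k < e) (hn : k < n) : step n e (preU k) .one = .uIn k := by
  cases k with
  | zero =>
    have h0 : ¬ (e = 0) := by omega
    simp [preU, step, rawStep, bndb, h0, hn]
  | succ k =>
    have h0 : ¬ (k + 1 = e) := by omega
    simp [preU, step, rawStep, bndb, h0, hn]

lemma step_preU_eq (he : e < n) : step n e (preU e) .one = .uCnt 1 := by
  have h1 : 1 ≤ n := by omega
  cases e with
  | zero => simp [preU, step, rawStep, bndb, h1]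
  | succ k => simp [preU, step, rawStep, bndb, h1]

lemma step_preV_lt {k i : ℕ} (hk : k < e) (hn : k < n) (hi : i ≤ n) :
    step n e (preV i k) .one = .vIn i k := by
  cases k with
  | zero =>
    have h0 : ¬ (e = 0) := by omega
    simp [preV, step, rawStep, bndb, h0, hn, hi]
  | succ k =>
    have h0 : ¬ (k + 1 = e) := by omega
    simp [preV, step, rawStep, bndb, h0, hn, hi]

lemma step_preV_eq {i : ℕ} (he : e < n) (hi : i ≤ n) :
    step n e (preV i e) .one = .vCnt i 1 := by
  have h1 : 1 ≤ n := by omega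
  cases e with
  | zero => simp [preV, step, rawStep, bndb, hi, h1]
  | succ k => simp [preV, step, rawStep, bndb, hi, h1]

lemma fl_skip_block {k i : ℕ} (hi : 1 ≤ i) (hin : i ≤ n) (hk : k < e) (hkn : k < n) :
    Fl (preU k) (block n i ++ [.zero]) = preU (k+1) := by
  obtain ⟨i', rfl⟩ : ∃ i', i = i' + 1 := ⟨i - 1, by omega⟩
  rw [block, List.replicate_succ, List.append_assoc, List.cons_append, List.foldl_cons,
    step_preU_lt hk hkn, List.foldl_append, fl_uIn_one _ _ hkn,
    show List.replicate (n - (i'+1)) Sym3.zero ++ [Sym3.zero]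
      = Sym3.zero :: List.replicate (n - (i'+1)) Sym3.zero by
        rw [← List.replicate_succ, List.replicate_succ'],
    List.foldl_cons, show step n e (.uIn k) .zero = .uGap k by simp [step, rawStep, bndb, hkn],
    fl_uGap_zero _ _ hkn]
  rfl

lemma fl_count_ones {i : ℕ} (hi : 1 ≤ i) (hin : i ≤ n) (he : e < n) :
    Fl (preU e) (List.replicate i .one) = .uCnt i := by
  obtain ⟨i', rfl⟩ : ∃ i', i = i' + 1 := ⟨i - 1, by omega⟩
  rw [List.replicate_succ, List.foldl_cons, step_preU_eq he, fl_uCnt_one i' 1 (by omega)]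
  congr 1; omega

lemma fl_count_block_zero {i : ℕ} (hi : 1 ≤ i) (hin : i ≤ n) (he : e < n) :
    Fl (preU e) (block n i ++ [.zero]) = .uDone i := by
  rw [block, List.append_assoc, List.foldl_append, fl_count_ones hi hin he]
  rcases Nat.eq_zero_or_pos (n - i) with h | h
  · rw [h]; simp [step, rawStep, bndb, hin]
  · obtain ⟨m, hm⟩ : ∃ m, n - i = m + 1 := ⟨n - i - 1, by omega⟩
    rw [hm, List.replicate_succ, List.cons_append, List.foldl_cons,
      show step n e (.uCnt i) .zero = .uDone i by simp [step, rawStep, bndb, hin],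
      List.foldl_append, fl_uDone _ _ hin (by simp), List.foldl_cons,
      show step n e (.uDone i) .zero = .uDone i by simp [step, rawStep, bndb, hin]]
    rfl

lemma fl_count_block_hash {i : ℕ} (hi : 1 ≤ i) (hin : i ≤ n) (he : e < n) :
    Fl (preU e) (block n i ++ [.hash]) = .vStart i := by
  rw [block, List.append_assoc, List.foldl_append, fl_count_ones hi hin he]
  rcases Nat.eq_zero_or_pos (n - i) with h | h
  · rw [h]; simp [step, rawStep, bndb, hin]
  · obtain ⟨m, hm⟩ : ∃ m, n - i = m + 1 := ⟨n - i - 1, by omega⟩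
    rw [hm, List.replicate_succ, List.cons_append, List.foldl_cons,
      show step n e (.uCnt i) .zero = .uDone i by simp [step, rawStep, bndb, hin],
      List.foldl_append, fl_uDone _ _ hin (by simp), List.foldl_cons,
      show step n e (.uDone i) .hash = .vStart i by simp [step, rawStep, bndb, hin]]
    rfl

lemma fl_skip_blockV {k i j : ℕ} (hj : 1 ≤ j) (hjn : j ≤ n) (hk : k < e) (hkn : k < n)
    (hi : i ≤ n) : Fl (preV i k) (block n j ++ [.zero]) = preV i (k+1) := by
  obtain ⟨j', rfl⟩ : ∃ j', j = j' + 1 := ⟨j - 1, by omega⟩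
  rw [block, List.replicate_succ, List.append_assoc, List.cons_append, List.foldl_cons,
    step_preV_lt hk hkn hi, List.foldl_append, fl_vIn_one _ _ _ hi hkn,
    show List.replicate (n - (j'+1)) Sym3.zero ++ [Sym3.zero]
      = Sym3.zero :: List.replicate (n - (j'+1)) Sym3.zero by
        rw [← List.replicate_succ, List.replicate_succ'],
    List.foldl_cons,
    show step n e (.vIn i k) .zero = .vGap i k by simp [step, rawStep, bndb, hkn, hi],
    fl_vGap_zero _ _ _ hi hkn]
  rfl

lemma fl_count_onesV {i j : ℕ} (hj : 1 ≤ j) (hjn : j ≤ n) (he : e < n) (hi : i ≤ n) :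
    Fl (preV i e) (List.replicate j .one) = .vCnt i j := by
  obtain ⟨j', rfl⟩ : ∃ j', j = j' + 1 := ⟨j - 1, by omega⟩
  rw [List.replicate_succ, List.foldl_cons, step_preV_eq he hi, fl_vCnt_one j' i hi 1 (by omega)]
  congr 1; omega

def outcome (i j : ℕ) : Info := if i = j then .rj else .ac

lemma fl_outcome (w : List Sym3) (i j : ℕ) : Fl (outcome i j) w = outcome i j := by
  unfold outcome; split
  · exact fl_rj w
  · exact fl_ac w

lemma accB_outcome (i j : ℕ) : accB (outcome i j) = decide (¬ i = j) := by
  unfold outcome; split <;> simp_all [accB]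

lemma fl_count_blockV_zero {i j : ℕ} (hj : 1 ≤ j) (hjn : j ≤ n) (he : e < n) (hi : i ≤ n) :
    Fl (preV i e) (block n j ++ [.zero]) = outcome i j := by
  rw [block, List.append_assoc, List.foldl_append, fl_count_onesV hj hjn he hi]
  have hstep : step n e (.vCnt i j) .zero = outcome i j := by
    unfold outcome; split <;> simp_all [step, rawStep, bndb]
  rcases Nat.eq_zero_or_pos (n - j) with h | h
  · rw [h]; simpa using hstep
  · obtain ⟨m, hm⟩ : ∃ m, n - j = m + 1 := ⟨n - j - 1, by omega⟩
    rw [hm, List.replicate_succ, List.cons_append, List.foldl_cons, hstep, fl_outcome]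

lemma fl_count_blockV_end {i j : ℕ} (hj : 1 ≤ j) (hjn : j ≤ n) (he : e < n) (hi : i ≤ n) :
    accB (Fl (preV i e) (block n j)) = decide (¬ i = j) := by
  rw [block, List.foldl_append, fl_count_onesV hj hjn he hi]
  rcases Nat.eq_zero_or_pos (n - j) with h | h
  · rw [h]; simp [accB]
  · obtain ⟨m, hm⟩ : ∃ m, n - j = m + 1 := ⟨n - j - 1, by omega⟩
    have hstep : step n e (.vCnt i j) .zero = outcome i j := by
      unfold outcome; split <;> simp_all [step, rawStep, bndb]
    rw [hm, List.replicate_succ, List.foldl_cons, hstep, fl_outcome, accB_outcome]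

end RUaux

namespace RUaux
open Info
variable {n e : ℕ}
local notation "Fl" => List.foldl (step n e)

lemma hash_not_mem_block (m i : ℕ) : Sym3.hash ∉ block m i := by
  intro h
  rcases List.mem_append.mp h with h | h <;>
    exact absurd (List.eq_of_mem_replicate h) (by rintro ⟨⟩)

lemma hash_not_mem_enc (m : ℕ) : ∀ l : List ℕ, Sym3.hash ∉ enc m l
  | [] => by simp [enc]
  | [i] => hash_not_mem_block m i
  | i :: j :: rest => by
    rw [show enc m (i :: j :: rest) = block m i ++ Sym3.zero :: enc m (j :: rest) from rfl]
    simp only [List.mem_append, List.mem_cons, not_or]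
    exact ⟨hash_not_mem_block m i, by rintro ⟨⟩, hash_not_mem_enc m (j :: rest)⟩

lemma fl_Mu : ∀ (l : List ℕ) (k : ℕ) (hval : ∀ a ∈ l, 1 ≤ a ∧ a ≤ n) (hke : k ≤ e)
    (hen : e < n) (helt : e < k + l.length),
    Fl (preU k) (enc n l ++ [.hash]) = .vStart (l.get ⟨e - k, by omega⟩)
  | [], k => by intro _ _ _ helt; simp at helt; omega
  | [i], k => by
    intro hval hke hen helt
    simp only [List.length_cons, List.length_nil] at helt
    have hek : k = e := by omega
    subst hek
    have hi := hval i (by simp)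
    rw [show enc n [i] = block n i from rfl, fl_count_block_hash hi.1 hi.2 hen]
    simp
  | i :: j :: rest, k => by
    intro hval hke hen helt
    have hi := hval i (by simp)
    rw [show enc n (i :: j :: rest) = block n i ++ Sym3.zero :: enc n (j :: rest) from rfl]
    by_cases hek : k = e
    · subst hek
      rw [show block n i ++ Sym3.zero :: enc n (j :: rest)
          = (block n i ++ [Sym3.zero]) ++ enc n (j :: rest) by simp,
        List.append_assoc, List.foldl_append, fl_count_block_zero hi.1 hi.2 hen,
        List.foldl_append, fl_uDone _ _ hi.2 (hash_not_mem_enc n _), List.foldl_cons,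
        show step n k (.uDone i) .hash = .vStart i by simp [step, rawStep, bndb, hi.2]]
      simp
    · have hk : k < e := by omega
      rw [show block n i ++ Sym3.zero :: enc n (j :: rest)
          = (block n i ++ [Sym3.zero]) ++ enc n (j :: rest) by simp,
        List.append_assoc, List.foldl_append, fl_skip_block hi.1 hi.2 hk (by omega),
        fl_Mu (j :: rest) (k+1) (fun a ha => hval a (List.mem_cons_of_mem _ ha)) (by omega) hen
          (by simp at helt ⊢; omega)]
      have h1 : e - k = (e - (k+1)) + 1 := by omega
      congr 1
      · simp [h1]

lemma fl_Mv : ∀ (l : List ℕ) (k i : ℕ) (hval : ∀ a ∈ l, 1 ≤ a ∧ a ≤ n) (hi : i ≤ n)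
    (hke : k ≤ e) (hen : e < n) (helt : e < k + l.length),
    accB (Fl (preV i k) (enc n l)) = decide (¬ i = l.get ⟨e - k, by omega⟩)
  | [], k, i => by intro _ _ _ _ helt; simp at helt; omega
  | [j], k, i => by
    intro hval hi hke hen helt
    simp only [List.length_cons, List.length_nil] at helt
    have hek : k = e := by omega
    subst hek
    have hj := hval j (by simp)
    rw [show enc n [j] = block n j from rfl, fl_count_blockV_end hj.1 hj.2 hen hi]
    simp
  | j :: j' :: rest, k, i => by
    intro hval hi hke hen helt
    have hj := hval j (by simp)
    rw [show enc n (j :: j' :: rest) = block n j ++ Sym3.zero :: enc n (j' :: rest) from rfl,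
      show block n j ++ Sym3.zero :: enc n (j' :: rest)
          = (block n j ++ [Sym3.zero]) ++ enc n (j' :: rest) by simp,
      List.foldl_append]
    by_cases hek : k = e
    · subst hek
      rw [fl_count_blockV_zero hj.1 hj.2 hen hi, fl_outcome, accB_outcome]
      simp
    · have hk : k < e := by omega
      rw [fl_skip_blockV hj.1 hj.2 hk (by omega) hi,
        fl_Mv (j' :: rest) (k+1) i (fun a ha => hval a (List.mem_cons_of_mem _ ha)) hi (by omega)
          hen (by simp at helt ⊢; omega)]
      have h1 : e - k = (e - (k+1)) + 1 := by omega
      congr 2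
      · simp [h1]

/-- The key computation: running the automaton with guess `e` on `enc n u ++ # :: enc n v`. -/
lemma fl_main (u v : List ℕ) (hu : ∀ a ∈ u, 1 ≤ a ∧ a ≤ n) (hv : ∀ a ∈ v, 1 ≤ a ∧ a ≤ n)
    (hul : u.length = n) (hvl : v.length = n) (hen : e < n) :
    accB (Fl .uStart (enc n u ++ Sym3.hash :: enc n v))
      = decide (¬ u.get ⟨e, by omega⟩ = v.get ⟨e, by omega⟩) := by
  have h1 : enc n u ++ Sym3.hash :: enc n v = (enc n u ++ [Sym3.hash]) ++ enc n v := by simp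
  have hg : u.get ⟨e - 0, by omega⟩ ∈ u := List.get_mem u _
  rw [h1, List.foldl_append,
    show (Info.uStart : Info) = preU 0 from rfl,
    fl_Mu u 0 hu (by omega) hen (by omega),
    show Info.vStart (u.get ⟨e - 0, by omega⟩) = preV (u.get ⟨e - 0, by omega⟩) 0 from rfl,
    fl_Mv v 0 _ hv (hu _ hg).2 (by omega) hen (by omega)]
  congr 2 <;> simp

end RUaux

namespace RUaux
open Info

def tagOf : Info → ℕ × ℕ × ℕ
  | .uStart => (0,0,0)
  | .uIn k => (1,k,0)
  | .uGap k => (2,k,0)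
  | .uCnt c => (3,c,0)
  | .uDone i => (4,i,0)
  | .vStart i => (5,i,0)
  | .vIn i k => (6,i,k)
  | .vGap i k => (7,i,k)
  | .vCnt i c => (8,i,c)
  | .ac => (9,0,0)
  | .rj => (10,0,0)
  | .dead => (11,0,0)

lemma tagOf_inj : Function.Injective tagOf := by
  intro a b h
  cases a <;> cases b <;> simp only [tagOf, Prod.mk.injEq] at h <;>
    first
      | rfl
      | (congr 1 <;> omega)
      | (exfalso; omega)

lemma tag_lt (s : Info) : (tagOf s).1 < 12 := by
  cases s <;> simp [tagOf]

lemma fields_le {n : ℕ} {s : Info} (h : bndb n s = true) :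
    (tagOf s).2.1 ≤ n ∧ (tagOf s).2.2 ≤ n := by
  cases s <;> simp_all [tagOf, bndb] <;> omega

/-- The bounded-info state space. -/
def BInfo (n : ℕ) : Type := {s : Info // bndb n s = true}

def binj (n : ℕ) (s : BInfo n) : Fin 12 × Fin (n+1) × Fin (n+1) :=
  (⟨(tagOf s.1).1, tag_lt s.1⟩,
    ⟨(tagOf s.1).2.1, by have := (fields_le s.2).1; omega⟩,
    ⟨(tagOf s.1).2.2, by have := (fields_le s.2).2; omega⟩)

lemma binj_inj (n : ℕ) : Function.Injective (binj n) := by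
  intro a b h
  simp only [binj, Prod.mk.injEq, Fin.mk.injEq] at h
  apply Subtype.ext
  apply tagOf_inj
  obtain ⟨h1, h2, h3⟩ := h
  exact Prod.ext h1 (Prod.ext h2 h3)

noncomputable instance BInfo.fintype (n : ℕ) : Fintype (BInfo n) :=
  Fintype.ofInjective (binj n) (binj_inj n)

lemma BInfo.card_le (n : ℕ) : Fintype.card (BInfo n) ≤ 12 * ((n+1) * (n+1)) := by
  have h := Fintype.card_le_of_injective (binj n) (binj_inj n)
  simpa [mul_assoc] using h

end RUaux

namespace RUaux
open Info

/-- The full word-reading function for guess `e`. -/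
def F (n e : ℕ) (w : List Sym3) : Info := List.foldl (step n e) .uStart w

/-- The state space of the machine for parameter `n`. -/
abbrev QT (n : ℕ) : Type := Unit ⊕ (Fin n × BInfo n)

noncomputable instance (n : ℕ) : Fintype (QT n) := by
  unfold QT; infer_instance

/-- The reach-unambiguous machine for `L₁`. -/
noncomputable def Mach (n : ℕ) : OneNFA Sym3 where
  Q := QT n
  start := Sum.inl ()
  next q a :=
    match q with
    | Sum.inl _ => {q' | (q' = Sum.inl () ∧ n = 0) ∨
        ∃ e : Fin n, q' = Sum.inr (e, ⟨step n e .uStart a, step_bnd n e _ a⟩)}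
    | Sum.inr (e, s) => {Sum.inr (e, ⟨step n e s.1 a, step_bnd n e _ a⟩)}
  next_nonempty q a := by
    match q with
    | Sum.inl _ =>
      rcases Nat.eq_zero_or_pos n with h | h
      · exact ⟨Sum.inl (), Or.inl ⟨rfl, h⟩⟩
      · exact ⟨_, Or.inr ⟨⟨0, h⟩, rfl⟩⟩
    | Sum.inr (e, s) => exact ⟨_, rfl⟩
  acc := {q | ∃ es : Fin n × BInfo n, q = Sum.inr es ∧ accB es.2.1 = true}

lemma next_inl {n : ℕ} (a : Sym3) : (Mach n).next (Sum.inl ()) a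
    = {q' | (q' = Sum.inl () ∧ n = 0) ∨
        ∃ e : Fin n, q' = Sum.inr (e, ⟨step n e .uStart a, step_bnd n e _ a⟩)} := rfl

lemma next_inr {n : ℕ} (e : Fin n) (s : BInfo n) (a : Sym3) :
    (Mach n).next (Sum.inr (e, s)) a
      = {Sum.inr (e, ⟨step n e s.1 a, step_bnd n e _ a⟩)} := rfl

/-- The unique path with guess `e`. -/
noncomputable def pPath (n : ℕ) (e : Fin n) (x : List Sym3) : Fin (x.length + 1) → QT n :=
  fun j => if (j : ℕ) = 0 then Sum.inl ()
    else Sum.inr (e, ⟨F n e (x.take j), foldl_bnd _ _ rfl⟩)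

lemma F_take_succ {n e : ℕ} (x : List Sym3) {j : ℕ} (h : j < x.length) :
    F n e (x.take (j+1)) = step n e (F n e (x.take j)) (x.get ⟨j, h⟩) := by
  rw [F, F, ← List.take_concat_get' x j h, List.foldl_append]
  simp [List.get_eq_getElem]

lemma pPath_isPath (n : ℕ) (e : Fin n) (x : List Sym3) :
    (Mach n).IsPath x (pPath n e x) := by
  constructor
  · show pPath n e x 0 = Sum.inl ()
    simp [pPath]
  · intro i
    have hsucc : ((i.succ : Fin (x.length + 1)) : ℕ) = (i : ℕ) + 1 := rfl
    have hcast : ((i.castSucc : Fin (x.length + 1)) : ℕ) = (i : ℕ) := rfl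
    by_cases h0 : (i : ℕ) = 0
    · have hc : pPath n e x i.castSucc = Sum.inl () := by simp [pPath, hcast, h0]
      rw [hc, next_inl]
      refine Or.inr ⟨e, ?_⟩
      simp only [pPath, hsucc, h0]
      simp only [if_neg (by omega : ¬ (0 + 1 = 0))]
      congr 1
      refine Prod.ext rfl (Subtype.ext ?_)
      have hlt : 0 < x.length := by have := i.isLt; omega
      have hgeti : x.get i = x.get ⟨0, hlt⟩ := by congr 1; exact Fin.ext h0
      show F n (e : ℕ) (x.take (0+1)) = step n (e : ℕ) Info.uStart (x.get i)
      rw [F_take_succ x hlt, hgeti]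
      simp [F]
    · have hc : pPath n e x i.castSucc
          = Sum.inr (e, ⟨F n e (x.take i), foldl_bnd _ _ rfl⟩) := by
        simp [pPath, hcast, h0]
      rw [hc]; erw [next_inr]
      simp only [Set.mem_singleton_iff, pPath, hsucc,
        if_neg (by omega : ¬ ((i : ℕ) + 1 = 0))]
      congr 1
      refine Prod.ext rfl (Subtype.ext ?_)
      exact F_take_succ x i.isLt

lemma path_char {n : ℕ} {x : List Sym3} {p : Fin (x.length + 1) → QT n}
    (hp : (Mach n).IsPath x p) :
    (n = 0 ∧ ∀ j, p j = Sum.inl ()) ∨ ∃ e : Fin n, p = pPath n e x := by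
  rcases Nat.eq_zero_or_pos n with hn | hn
  · left
    refine ⟨hn, ?_⟩
    have key : ∀ k (hk : k < x.length + 1), p ⟨k, hk⟩ = Sum.inl () := by
      intro k
      induction k with
      | zero => intro hk; exact hp.1
      | succ k ih =>
        intro hk
        have hk' : k < x.length := by omega
        have hmem := hp.2 ⟨k, hk'⟩
        have hcs : (⟨k, hk'⟩ : Fin x.length).castSucc = ⟨k, by omega⟩ := rfl
        have hsc : (⟨k, hk'⟩ : Fin x.length).succ = ⟨k + 1, hk⟩ := rfl
        rw [hcs, hsc, ih (by omega), next_inl] at hmem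
        rcases hmem with ⟨h1, _⟩ | ⟨e, _⟩
        · exact h1
        · exact absurd e.isLt (by omega)
    intro j
    have := key j.1 j.2
    simpa using this
  · right
    by_cases hx : x.length = 0
    · refine ⟨⟨0, hn⟩, funext fun j => ?_⟩
      have hj : (j : ℕ) = 0 := by omega
      have hj' : j = 0 := by apply Fin.ext; simpa using hj
      rw [hj']
      rw [show pPath n ⟨0, hn⟩ x 0 = Sum.inl () by simp [pPath]]
      exact hp.1
    · have h1 : 0 < x.length := by omega
      have hmem := hp.2 ⟨0, h1⟩
      have hcs : (⟨0, h1⟩ : Fin x.length).castSucc = ⟨0, by omega⟩ := rfl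
      have hsc : (⟨0, h1⟩ : Fin x.length).succ = ⟨1, by omega⟩ := rfl
      have hp0 : p ⟨0, by omega⟩ = Sum.inl () := hp.1
      rw [hcs, hsc, hp0, next_inl] at hmem
      rcases hmem with ⟨_, h0⟩ | ⟨e, he⟩
      · omega
      · refine ⟨e, funext fun j => ?_⟩
        have key : ∀ k (hk : k < x.length + 1), p ⟨k, hk⟩ = pPath n e x ⟨k, hk⟩ := by
          intro k
          induction k with
          | zero =>
            intro hk
            rw [show pPath n e x ⟨0, hk⟩ = Sum.inl () by simp [pPath]]
            exact hp.1
          | succ k ih =>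
            intro hk
            have hk' : k < x.length := by omega
            rcases Nat.eq_zero_or_pos k with hk0 | hk0
            · subst hk0
              rw [he]
              simp only [pPath, if_neg (by omega : ¬ ((1 : ℕ) = 0))]
              congr 1
              refine Prod.ext rfl (Subtype.ext ?_)
              show step n (e : ℕ) Info.uStart (x.get ⟨0, h1⟩) = F n (e : ℕ) (x.take (0+1))
              rw [F_take_succ x h1]
              simp [F]
            · have hmem2 := hp.2 ⟨k, hk'⟩
              have hcs2 : (⟨k, hk'⟩ : Fin x.length).castSucc = ⟨k, by omega⟩ := rfl
              have hsc2 : (⟨k, hk'⟩ : Fin x.length).succ = ⟨k + 1, hk⟩ := rfl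
              rw [hcs2, hsc2, ih (by omega)] at hmem2
              have hkne : ¬ (k = 0) := by omega
              rw [show pPath n e x ⟨k, by omega⟩
                  = Sum.inr (e, ⟨F n e (x.take k), foldl_bnd _ _ rfl⟩) by
                simp [pPath, hkne]] at hmem2; erw [next_inr] at hmem2
              erw [Set.mem_singleton_iff] at hmem2
              rw [hmem2]
              simp only [pPath, if_neg (by omega : ¬ (k + 1 = 0))]
              congr 1
              refine Prod.ext rfl (Subtype.ext ?_)
              exact (F_take_succ x hk').symm
        have := key j.1 j.2
        simpa using this

lemma accepts_iff {n : ℕ} (x : List Sym3) (hx : x ≠ []) :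
    (Mach n).Accepts x ↔ ∃ e : Fin n, accB (F n e x) = true := by
  have hxl : x.length ≠ 0 := by simpa using hx
  constructor
  · rintro ⟨p, hp, hacc⟩
    obtain ⟨es, hes, haccB⟩ := hacc
    rcases path_char hp with ⟨hn, hall⟩ | ⟨e, rfl⟩
    · rw [hall _] at hes; exact absurd hes (by simp)
    · refine ⟨e, ?_⟩
      rw [show pPath n e x (Fin.last x.length)
          = Sum.inr (e, ⟨F n e (x.take x.length), foldl_bnd _ _ rfl⟩) by
        simp [pPath, Fin.last, hxl]] at hes
      obtain ⟨rfl⟩ := Sum.inr.inj hes.symm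
      simpa [List.take_length] using haccB
  · rintro ⟨e, hacc⟩
    refine ⟨pPath n e x, pPath_isPath n e x, ?_⟩
    refine ⟨(e, ⟨F n e x, foldl_bnd _ _ rfl⟩), ?_, hacc⟩
    simp [pPath, Fin.last, hxl, List.take_length]

end RUaux
namespace RUaux

lemma QT_card_le (n : ℕ) : Fintype.card (QT n) ≤ 12 * (n+1)^3 := by
  have h1 : Fintype.card (QT n) = 1 + n * Fintype.card (BInfo n) := by
    show Fintype.card (Unit ⊕ (Fin n × BInfo n)) = _
    rw [Fintype.card_sum, Fintype.card_prod, Fintype.card_fin, Fintype.card_unit]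
  rw [h1]
  have h2 := BInfo.card_le n
  nlinarith [h2, Nat.zero_le n]

lemma mach_polysize : PolySize1 (fun n => Mach n) := by
  refine ⟨Polynomial.C 12 * (Polynomial.X + 1)^3, fun n => ?_⟩
  have h1 : ((Polynomial.C 12 * (Polynomial.X + 1)^3 : Polynomial ℕ)).eval n
      = 12 * (n+1)^3 := by simp
  rw [h1]
  exact QT_card_le n

lemma mach_solves : Solves1 (fun n => Mach n) L1prob := by
  intro n
  constructor
  · rintro x ⟨u, v, hu, hv, hne, rfl⟩
    have hn : 0 < n := by
      rcases Nat.eq_zero_or_pos n with h | h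
      · exfalso
        apply hne
        have hu0 : u = [] := List.length_eq_zero_iff.mp (show u.length = 0 by rw [hu.1, h])
        have hv0 : v = [] := List.length_eq_zero_iff.mp (show v.length = 0 by rw [hv.1, h])
        rw [hu0, hv0]
      · exact h
    have hdiff : ∃ (i : ℕ) (h1 : i < u.length) (h2 : i < v.length),
        u.get ⟨i, h1⟩ ≠ v.get ⟨i, h2⟩ := by
      by_contra hc
      push_neg at hc
      exact hne (List.ext_get (by rw [hu.1, hv.1]) hc)
    obtain ⟨i, h1, h2, hne'⟩ := hdiff
    have hul := hu.1
    have hvl := hv.1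
    show (Mach n).Accepts (enc n u ++ Sym3.hash :: enc n v)
    rw [accepts_iff _ (by simp)]
    refine ⟨⟨i, by omega⟩, ?_⟩
    show accB (List.foldl (step n i) Info.uStart (enc n u ++ Sym3.hash :: enc n v)) = true
    rw [fl_main u v hu.2 hv.2 hu.1 hv.1 (by omega)]
    simpa using hne'
  · rintro x ⟨u, v, hu, hv, heq, rfl⟩ hacc
    subst heq
    have hacc' : (Mach n).Accepts (enc n u ++ Sym3.hash :: enc n u) := hacc
    rw [accepts_iff _ (by simp)] at hacc'
    obtain ⟨e, he⟩ := hacc'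
    rw [show F n (e : ℕ) (enc n u ++ Sym3.hash :: enc n u)
        = List.foldl (step n (e : ℕ)) Info.uStart (enc n u ++ Sym3.hash :: enc n u) from rfl,
      fl_main u u hu.2 hu.2 hu.1 hu.1 (by have := e.isLt; omega)] at he
    simp at he

lemma mach_acceptfew : AcceptFew1 (fun n => Mach n) L1prob := by
  refine ⟨MvPolynomial.X 0, fun n x _ => ?_⟩
  have heval : MvPolynomial.eval ![n, x.length] (MvPolynomial.X 0 : MvPolynomial (Fin 2) ℕ)
      = n := by simp
  rw [heval]
  have hsub : {p | (Mach n).IsAccPath x p} ⊆ Set.range (fun e : Fin n => pPath n e x) := by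
    rintro p ⟨hp, hacc⟩
    rcases path_char hp with ⟨hn, hall⟩ | ⟨e, rfl⟩
    · exfalso
      obtain ⟨es, hes, _⟩ := hacc
      rw [hall _] at hes
      exact absurd hes (by simp)
    · exact ⟨e, rfl⟩
  calc {p | (Mach n).IsAccPath x p}.ncard
      ≤ (Set.range (fun e : Fin n => pPath n e x)).ncard :=
        Set.ncard_le_ncard hsub (Set.finite_range _)
    _ = ((fun e : Fin n => pPath n e x) '' Set.univ).ncard := by rw [Set.image_univ]
    _ ≤ (Set.univ : Set (Fin n)).ncard := Set.ncard_image_le Set.finite_univ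
    _ = n := by rw [Set.ncard_univ, Nat.card_eq_fintype_card, Fintype.card_fin]

lemma mach_reachU : ReachUnambiguous1 (fun n => Mach n) L1prob := by
  intro n x _ i _ q
  intro p hp p' hp'
  simp only [Set.mem_setOf_eq] at hp hp'
  rcases path_char hp.1 with ⟨hn, h⟩ | ⟨e, rfl⟩ <;>
    rcases path_char hp'.1 with ⟨hn', h'⟩ | ⟨e', rfl⟩
  · funext j; rw [h j, h' j]
  · exact absurd e'.isLt (by omega)
  · exact absurd e.isLt (by omega)
  · by_cases hlen : (x.take i).length = 0
    · funext j
      have hj : (j : ℕ) = 0 := by have := j.isLt; omega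
      simp [pPath, hj]
    · have hq := hp.2.trans hp'.2.symm
      have hlast : ((Fin.last (x.take i).length : Fin ((x.take i).length + 1)) : ℕ)
          = (x.take i).length := rfl
      simp only [pPath, hlast, if_neg hlen] at hq
      have hee : e = e' := by
        have := Sum.inr.inj hq
        exact congrArg Prod.fst this
      rw [hee]

end RUaux


/-- The family `L₁` belongs to `1ReachU`. -/
theorem L1_mem_oneReachU : L1fam ∈ oneReachU := by
  exact ⟨fun n => RUaux.Mach n, RUaux.mach_polysize, RUaux.mach_acceptfew,
    RUaux.mach_reachU, RUaux.mach_solves⟩
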